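/- Let 1 < ν < 2 and f : ℕ_{a−1} → ℝ. If the nabla Riemann–Liouville fractional difference ∇_{a−1}^ν f(t) ≥ 0 for each t ∈ ℕ_a, then ∇f(t) ≥ 0 for all t ∈ ℕ_{a+1}; that is, f is nondecreasing on ℕ_{a+1}. -/

import Mathlib

/-- Rising factorial `t^{ᾱ} = Γ(t+α)/Γ(t)`. -/
noncomputable def risingFactorial (t α : ℝ) : ℝ := Real.Gamma (t + α) / Real.Gamma t

/-- The nabla (left Riemann) fractional difference with base point `a - 1`, in its
equivalent representation `∇_{a-1}^ν f(t) = (1/Γ(-ν)) Σ_{s=a}^{t} (t-s+1)^{\overline{-ν-1}} f(s)`. -/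
noncomputable def nablaRL (a : ℤ) (ν : ℝ) (f : ℤ → ℝ) (t : ℤ) : ℝ :=
  (1 / Real.Gamma (-ν)) *
    ∑ j ∈ Finset.range ((t - a).toNat + 1),
      risingFactorial ((t : ℝ) - (a : ℝ) - (j : ℝ) + 1) (-ν - 1) * f (a + j)

/-- If `1 < ν < 2` and `∇_{a-1}^ν f(t) ≥ 0` for each `t ∈ ℕ_a`, then `∇ f(t) ≥ 0`
for all `t ∈ ℕ_{a+1}`; that is, `f` is nondecreasing on `ℕ_{a+1}`. -/
noncomputable def cc (ν : ℝ) : ℕ → ℝ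
  | 0 => 1
  | k+1 => cc ν k * ((k : ℝ) - ν) / ((k : ℝ) + 1)

noncomputable def dd (ν : ℝ) : ℕ → ℝ
  | 0 => 1
  | n+1 => dd ν n * (((n : ℝ) + 1) - ν) / ((n : ℝ) + 1)

lemma cc_succ (ν : ℝ) (k : ℕ) : cc ν (k + 1) = cc ν k * ((k : ℝ) - ν) / ((k : ℝ) + 1) := rfl

lemma dd_succ (ν : ℝ) (n : ℕ) : dd ν (n + 1) = dd ν n * (((n : ℝ) + 1) - ν) / ((n : ℝ) + 1) := rfl

lemma nat_sub_ne {ν : ℝ} (hν1 : 1 < ν) (hν2 : ν < 2) (k : ℕ) : (k : ℝ) - ν ≠ 0 := by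
  intro hk
  have hk' : (k : ℝ) = ν := by linarith
  rcases le_or_gt k 1 with h | h
  · have : (k : ℝ) ≤ 1 := by exact_mod_cast h
    linarith
  · have : (2 : ℝ) ≤ (k : ℝ) := by exact_mod_cast h
    linarith

lemma gamma_ne {ν : ℝ} (hν1 : 1 < ν) (hν2 : ν < 2) : Real.Gamma (-ν) ≠ 0 := by
  apply Real.Gamma_ne_zero
  intro m hm
  exact nat_sub_ne hν1 hν2 m (by linarith [neg_injective hm])

lemma gamma_eq {ν : ℝ} (hν1 : 1 < ν) (hν2 : ν < 2) (k : ℕ) :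
    Real.Gamma ((k : ℝ) - ν) = Real.Gamma (-ν) * cc ν k * (Nat.factorial k) := by
  induction k with
  | zero => simp [cc]
  | succ k ih =>
    have h1 : ((k + 1 : ℕ) : ℝ) - ν = ((k : ℝ) - ν) + 1 := by push_cast; ring
    have hk1 : (k : ℝ) + 1 ≠ 0 := by positivity
    rw [h1, Real.Gamma_add_one (nat_sub_ne hν1 hν2 k), ih, cc_succ]
    push_cast [Nat.factorial_succ]
    field_simp

lemma coeff_eq {ν : ℝ} (hν1 : 1 < ν) (hν2 : ν < 2) (k : ℕ) :
    risingFactorial ((k : ℝ) + 1) (-ν - 1) = Real.Gamma (-ν) * cc ν k := by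
  have h1 : (k : ℝ) + 1 + (-ν - 1) = (k : ℝ) - ν := by ring
  have hfac : Real.Gamma ((k : ℝ) + 1) = (Nat.factorial k : ℝ) := by
    exact_mod_cast Real.Gamma_nat_eq_factorial k
  have hne : (Nat.factorial k : ℝ) ≠ 0 := by positivity
  rw [risingFactorial, h1, gamma_eq hν1 hν2, hfac]
  field_simp

lemma cd_eq {ν : ℝ} (n : ℕ) : cc ν n * ((n : ℝ) - ν) = -ν * dd ν n := by
  induction n with
  | zero => simp [cc, dd]
  | succ n ih =>
    have hn1 : (n : ℝ) + 1 ≠ 0 := by positivity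
    rw [cc_succ, dd_succ]
    push_cast
    field_simp
    linear_combination ((n : ℝ) + 1 - ν) * ih

lemma sum_cc {ν : ℝ} (n : ℕ) : ∑ k ∈ Finset.range (n + 1), cc ν k = dd ν n := by
  induction n with
  | zero => simp [cc, dd]
  | succ n ih =>
    rw [Finset.sum_range_succ, ih, cc_succ, dd_succ]
    have hn1 : (n : ℝ) + 1 ≠ 0 := by positivity
    field_simp
    linear_combination cd_eq (ν := ν) n

lemma cc_one {ν : ℝ} : cc ν 1 = -ν := by simp [cc]

lemma cc_pos {ν : ℝ} (hν1 : 1 < ν) (hν2 : ν < 2) (k : ℕ) : 0 ≤ cc ν (k + 2) := by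
  induction k with
  | zero =>
    rw [show (0+2 : ℕ) = 1 + 1 from rfl, cc_succ, cc_one]
    norm_num
    nlinarith
  | succ k ih =>
    rw [show (k+1+2 : ℕ) = (k+2) + 1 from rfl, cc_succ]
    have h1 : (0:ℝ) ≤ ((k + 2 : ℕ) : ℝ) - ν := by push_cast; linarith [Nat.cast_nonneg (α := ℝ) k]
    have h2 : (0:ℝ) < ((k + 2 : ℕ) : ℝ) + 1 := by positivity
    positivity

lemma dd_nonpos {ν : ℝ} (hν1 : 1 < ν) (hν2 : ν < 2) (n : ℕ) : dd ν (n + 1) ≤ 0 := by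
  induction n with
  | zero =>
    rw [dd_succ]
    simp [dd]
    linarith
  | succ n ih =>
    rw [dd_succ]
    have h1 : (0:ℝ) ≤ ((n + 1 : ℕ) : ℝ) + 1 - ν := by push_cast; linarith [Nat.cast_nonneg (α := ℝ) n]
    have h2 : (0:ℝ) < ((n + 1 : ℕ) : ℝ) + 1 := by positivity
    apply div_nonpos_of_nonpos_of_nonneg _ (le_of_lt h2)
    exact mul_nonpos_of_nonpos_of_nonneg ih h1

lemma nabla_eq {ν : ℝ} (hν1 : 1 < ν) (hν2 : ν < 2) (a : ℤ) (f : ℤ → ℝ) (t : ℤ) (hat : a ≤ t) :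
    nablaRL a ν f t = ∑ k ∈ Finset.range ((t - a).toNat + 1), cc ν k * f (t - k) := by
  set n := (t - a).toNat with hn
  have hn' : (t - a : ℤ) = (n : ℤ) := (Int.toNat_of_nonneg (by omega)).symm
  have hΓ : Real.Gamma (-ν) ≠ 0 := gamma_ne hν1 hν2
  rw [nablaRL, Finset.mul_sum,
    ← Finset.sum_range_reflect (fun k => cc ν k * f (t - k)) (n + 1)]
  apply Finset.sum_congr rfl
  intro j hj
  have hj' : j ≤ n := Nat.lt_succ_iff.mp (Finset.mem_range.mp hj)
  have hreal : (t : ℝ) - (a : ℝ) = (n : ℝ) := by exact_mod_cast congrArg (Int.cast : ℤ → ℝ) hn'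
  have harg : (t : ℝ) - (a : ℝ) - (j : ℝ) + 1 = ((n - j : ℕ) : ℝ) + 1 := by
    rw [Nat.cast_sub hj', hreal]
  have hidx : a + (j : ℤ) = t - ((n + 1 - 1 - j : ℕ) : ℤ) := by
    simp only [Nat.add_sub_cancel]
    rw [Nat.cast_sub hj']
    omega
  rw [harg, coeff_eq hν1 hν2, hidx, show n + 1 - 1 - j = n - j from by omega]
  field_simp

theorem nabla_monotonicity (a : ℤ) (ν : ℝ) (hν1 : 1 < ν) (hν2 : ν < 2) (f : ℤ → ℝ)
    (h : ∀ t : ℤ, a ≤ t → nablaRL a ν f t ≥ 0) :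
    ∀ t : ℤ, a + 1 ≤ t → f t - f (t - 1) ≥ 0 := by
  have h0 : 0 ≤ f a := by
    have := h a le_rfl
    rw [nabla_eq hν1 hν2 a f a le_rfl] at this
    simpa [cc] using this
  have mono : ∀ n : ℕ, ∀ j k : ℕ, j ≤ k → k ≤ n → f (a + j) ≤ f (a + k) := by
    intro n
    induction n with
    | zero =>
      intro j k hjk hk
      have hj0 : j = 0 := by omega
      have hk0 : k = 0 := by omega
      subst hj0; subst hk0; exact le_rfl
    | succ n ih =>
      have key : f (a + (n : ℤ)) ≤ f (a + (n : ℤ) + 1) := by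
        set t : ℤ := a + (n : ℤ) + 1 with hta
        have hat : a ≤ t := by omega
        have hh := h t hat
        rw [nabla_eq hν1 hν2 a f t hat,
          show (t - a).toNat = n + 1 from by omega,
          Finset.sum_range_succ', Finset.sum_range_succ'] at hh
        -- hh : 0 ≤ ∑ k in range n, cc (k+1+1) * f (t - (k+1+1)) + cc (0+1) * f (t - (0+1)) + cc 0 * f (t - 0)
        have hb : ∑ k ∈ Finset.range n, cc ν (k + 1 + 1) * f (t - ((k + 1 + 1 : ℕ) : ℤ)) ≤
            (∑ k ∈ Finset.range n, cc ν (k + 1 + 1)) * f (t - 1) := by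
          rw [Finset.sum_mul]
          apply Finset.sum_le_sum
          intro i hi
          have hi' : i < n := Finset.mem_range.mp hi
          have hfi : f (t - ((i + 1 + 1 : ℕ) : ℤ)) ≤ f (t - 1) := by
            have e1 : t - ((i + 1 + 1 : ℕ) : ℤ) = a + ((n - 1 - i : ℕ) : ℤ) := by push_cast; omega
            have e2 : t - 1 = a + ((n : ℕ) : ℤ) := by omega
            rw [e1, e2]
            exact ih (n - 1 - i) n (by omega) le_rfl
          exact mul_le_mul_of_nonneg_left hfi (cc_pos hν1 hν2 i)
        have hsum : ∑ k ∈ Finset.range n, cc ν (k + 1 + 1) = dd ν (n + 1) + ν - 1 := by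
          have h1 := sum_cc (ν := ν) (n + 1)
          rw [Finset.sum_range_succ', Finset.sum_range_succ'] at h1
          simp only [cc_one, show cc ν (0+1) = cc ν 1 from rfl, show cc ν 0 = 1 from rfl] at h1
          linarith
        have hdd : dd ν (n + 1) ≤ 0 := dd_nonpos hν1 hν2 n
        have hft1 : 0 ≤ f (t - 1) := by
          have e2 : t - 1 = a + ((n : ℕ) : ℤ) := by omega
          rw [e2]
          calc (0:ℝ) ≤ f a := h0
            _ = f (a + ((0:ℕ) : ℤ)) := by norm_num
            _ ≤ f (a + ((n : ℕ) : ℤ)) := ih 0 n (Nat.zero_le n) le_rfl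
        have hc1 : cc ν (0 + 1) = -ν := cc_one
        have hc0 : cc ν 0 = 1 := rfl
        rw [hc1, hc0] at hh
        have ht0 : t - ((0 : ℕ) : ℤ) = t := by norm_num
        have ht1 : t - ((0 + 1 : ℕ) : ℤ) = t - 1 := by norm_num
        rw [ht0, ht1] at hh
        have e2 : t - 1 = a + ((n : ℕ) : ℤ) := by omega
        have goal' : f (t - 1) ≤ f t := by
          nlinarith [mul_nonneg (neg_nonneg.mpr hdd) hft1, hsum ▸ hb]
        calc f (a + (n : ℤ)) = f (t - 1) := by rw [e2]
          _ ≤ f t := goal'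
      intro j k hjk hk
      rcases Nat.lt_succ_iff_lt_or_eq.mp (Nat.lt_succ_of_le hk) with hk' | hk'
      · exact ih j k hjk (by omega)
      · subst hk'
        rcases Nat.lt_succ_iff_lt_or_eq.mp (Nat.lt_succ_of_le hjk) with hj' | hj'
        · calc f (a + (j : ℤ)) ≤ f (a + (n : ℤ)) := ih j n (by omega) le_rfl
            _ ≤ f (a + (n : ℤ) + 1) := key
            _ = f (a + ((n + 1 : ℕ) : ℤ)) := by push_cast; ring_nf
        · subst hj'; exact le_rfl
  intro t ht
  have h1 : f t = f (a + ((t - a - 1).toNat + 1 : ℕ)) := by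
    congr 1; push_cast; omega
  have h2 : f (t - 1) = f (a + (((t - a - 1).toNat : ℕ) : ℤ)) := by
    congr 1; push_cast; omega
  rw [h1, h2, ge_iff_le, sub_nonneg]
  exact mono ((t - a - 1).toNat + 1) _ _ (Nat.le_succ _) le_rfl
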